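/- Let ψ:(0,∞)→(0,∞) be non-decreasing with ∫₀^r s/ψ(s) ds < ∞ for every r>0, and let Φ(r) := r²/(2∫₀^r s/ψ(s) ds). If lim_{λ→0⁺} Φ(λ)/ψ(λ) = 0, then Φ varies regularly at 0 with index 2, i.e. for every κ>0, lim_{x→0⁺} Φ(κx)/Φ(x) = κ². Similarly, if lim_{λ→∞} Φ(λ)/ψ(λ) = 0, then for every κ>0, lim_{x→∞} Φ(κx)/Φ(x) = κ². -/

import Mathlib

open MeasureTheory Set Filter

private lemma stmt8_aux (ψ Φ : ℝ → ℝ)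
    (hψ_pos : ∀ r : ℝ, 0 < r → 0 < ψ r)
    (hψ_mono : ∀ r s : ℝ, 0 < r → r ≤ s → ψ r ≤ ψ s)
    (hψ_int : ∀ r : ℝ, 0 < r → IntegrableOn (fun s => s / ψ s) (Ioo 0 r))
    (hΦ : ∀ r : ℝ, 0 < r → Φ r = r ^ 2 / (2 * ∫ s in Ioo (0:ℝ) r, s / ψ s))
    (L : Filter ℝ)
    (hLpos : ∀ᶠ x in L, 0 < x)
    (hmul : ∀ c : ℝ, 0 < c → Tendsto (fun x => c * x) L L)
    (h : Tendsto (fun l => Φ l / ψ l) L (nhds 0))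
    (κ : ℝ) (hκ : 0 < κ) :
    Tendsto (fun x => Φ (κ * x) / Φ x) L (nhds (κ ^ 2)) := by
  set f : ℝ → ℝ := fun s => s / ψ s with hf
  set J : ℝ → ℝ := fun r => ∫ s in Ioo (0:ℝ) r, f s with hJdef
  have hII : ∀ a b : ℝ, 0 ≤ a → a ≤ b → IntervalIntegrable f volume a b := by
    intro a b ha hab
    rw [intervalIntegrable_iff_integrableOn_Ioc_of_le hab]
    rcases lt_or_ge 0 b with hb | hb
    · exact (hψ_int (b + 1) (by linarith)).mono_set
        (fun s hs => ⟨lt_of_le_of_lt ha hs.1, by have := hs.2; linarith⟩)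
    · have hab' : a = b := le_antisymm hab (by linarith)
      simp [hab']
  have hJ_int : ∀ r : ℝ, 0 ≤ r → J r = ∫ s in (0:ℝ)..r, f s := by
    intro r hr
    rw [intervalIntegral.integral_of_le hr, MeasureTheory.integral_Ioc_eq_integral_Ioo]
  have hJdiffeq : ∀ a b : ℝ, 0 ≤ a → a ≤ b → J b - J a = ∫ s in a..b, f s := by
    intro a b ha hab
    rw [hJ_int a ha, hJ_int b (ha.trans hab)]
    have := intervalIntegral.integral_add_adjacent_intervals
      (hII 0 a le_rfl ha) (hII a b ha hab)
    linarith
  have hJpos : ∀ r : ℝ, 0 < r → 0 < J r := by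
    intro r hr
    have hnn : 0 ≤ᵐ[volume.restrict (Ioo (0:ℝ) r)] f := by
      refine (ae_restrict_iff' measurableSet_Ioo).2 (ae_of_all _ ?_)
      intro s hs
      exact div_nonneg hs.1.le (hψ_pos s hs.1).le
    rw [hJdef]
    rw [setIntegral_pos_iff_support_of_nonneg_ae hnn (hψ_int r hr)]
    have hsub : Ioo (0:ℝ) r ⊆ Function.support f := by
      intro s hs
      exact ne_of_gt (div_pos hs.1 (hψ_pos s hs.1))
    calc (0:ENNReal) < volume (Ioo (0:ℝ) r) := by simp [Real.volume_Ioo, hr]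
    _ = volume (Function.support f ∩ Ioo (0:ℝ) r) := by
        rw [Set.inter_eq_self_of_subset_right hsub]
  have hJmono : ∀ a b : ℝ, 0 < a → a ≤ b → J a ≤ J b := by
    intro a b ha hab
    have := hJdiffeq a b ha.le hab
    have hnn : 0 ≤ ∫ s in a..b, f s := by
      apply intervalIntegral.integral_nonneg hab
      intro u hu
      exact div_nonneg (ha.le.trans hu.1) (hψ_pos u (lt_of_lt_of_le ha hu.1)).le
    linarith
  have hJbound : ∀ a b : ℝ, 0 < a → a ≤ b → J b - J a ≤ (b ^ 2 - a ^ 2) / (2 * ψ a) := by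
    intro a b ha hab
    rw [hJdiffeq a b ha.le hab]
    have hle : ∫ s in a..b, f s ≤ ∫ s in a..b, s * (ψ a)⁻¹ := by
      apply intervalIntegral.integral_mono_on hab (hII a b ha.le hab)
        (intervalIntegral.intervalIntegrable_id.mul_const _)
      intro u hu
      have hu0 : 0 < u := lt_of_lt_of_le ha hu.1
      have : u / ψ u ≤ u / ψ a := by
        gcongr
        · exact hψ_pos a ha
        · exact hψ_mono a u ha hu.1
      simpa [hf, div_eq_mul_inv] using this
    have heq : ∫ s in a..b, s * (ψ a)⁻¹ = (b ^ 2 - a ^ 2) / (2 * ψ a) := by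
      rw [intervalIntegral.integral_mul_const, integral_id]
      field_simp
    linarith
  -- main argument
  set c : ℝ := min κ 1 with hc
  set C : ℝ := max κ 1 with hC
  have hc0 : 0 < c := lt_min hκ one_pos
  have hcκ : c ≤ κ := min_le_left _ _
  have hκC : κ ≤ C := le_max_left _ _
  have hc1 : c ≤ 1 := min_le_right _ _
  have h1C : 1 ≤ C := le_max_right _ _
  have hΦJ : ∀ r : ℝ, 0 < r → Φ r = r ^ 2 / (2 * J r) := fun r hr => hΦ r hr
  have htend : Tendsto (fun x => Φ (c * x) / ψ (c * x)) L (nhds 0) := h.comp (hmul c hc0)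
  have hbnd : ∀ᶠ x in L, |J (κ * x) / J x - 1| ≤
      (C ^ 2 / c ^ 2 - 1) * (Φ (c * x) / ψ (c * x)) := by
    filter_upwards [hLpos] with x hx
    set a := c * x with ha'
    set b := C * x with hb'
    have ha : 0 < a := mul_pos hc0 hx
    have hax : a ≤ x := by nlinarith
    have hxb : x ≤ b := by nlinarith
    have hak : a ≤ κ * x := by nlinarith
    have hkb : κ * x ≤ b := by nlinarith
    have hJa := hJpos a ha
    have hJx := hJpos x hx
    have hJax := hJmono a x ha hax
    have hJxb := hJmono x b hx hxb
    have hJak := hJmono a (κ * x) ha hak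
    have hJkb := hJmono (κ * x) b (lt_of_lt_of_le ha hak) hkb
    have h1 : |J (κ * x) - J x| ≤ J b - J a := by
      rw [abs_le]; constructor <;> linarith
    have h2 : |J (κ * x) / J x - 1| = |J (κ * x) - J x| / J x := by
      have : J (κ * x) / J x - 1 = (J (κ * x) - J x) / J x := by field_simp
      rw [this, abs_div, abs_of_pos hJx]
    rw [h2]
    have h3 : |J (κ * x) - J x| / J x ≤ (J b - J a) / J a :=
      div_le_div₀ (by linarith [abs_nonneg (J (κ * x) - J x)]) h1 hJa hJax
    have h4 : (J b - J a) / J a ≤ ((b ^ 2 - a ^ 2) / (2 * ψ a)) / J a := by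
      gcongr
      exact hJbound a b ha (hax.trans hxb)
    have hψa := hψ_pos a ha
    have h5 : ((b ^ 2 - a ^ 2) / (2 * ψ a)) / J a =
        (C ^ 2 / c ^ 2 - 1) * (Φ a / ψ a) := by
      rw [hΦJ a ha]
      have hb2 : b ^ 2 - a ^ 2 = (C ^ 2 / c ^ 2 - 1) * a ^ 2 := by
        rw [ha', hb']; field_simp
      rw [hb2]
      ring
    linarith
  have hE : Tendsto (fun x => (C ^ 2 / c ^ 2 - 1) * (Φ (c * x) / ψ (c * x))) L (nhds 0) := by
    simpa using htend.const_mul (C ^ 2 / c ^ 2 - 1)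
  have hR : Tendsto (fun x => J (κ * x) / J x - 1) L (nhds 0) := by
    apply squeeze_zero_norm' _ hE
    filter_upwards [hbnd] with x hx using hx
  have hR1 : Tendsto (fun x => J (κ * x) / J x) L (nhds 1) := by
    have := hR.add_const 1
    simpa using this
  have hfinal : Tendsto (fun x => κ ^ 2 * (J (κ * x) / J x)⁻¹) L (nhds (κ ^ 2)) := by
    have := (hR1.inv₀ one_ne_zero).const_mul (κ ^ 2)
    simpa using this
  apply hfinal.congr'
  filter_upwards [hLpos] with x hx
  have hJx := hJpos x hx
  have hJk := hJpos (κ * x) (mul_pos hκ hx)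
  rw [hΦJ x hx, hΦJ (κ * x) (mul_pos hκ hx)]
  field_simp

theorem stmt_8 (ψ Φ : ℝ → ℝ)
    (hψ_pos : ∀ r : ℝ, 0 < r → 0 < ψ r)
    (hψ_mono : ∀ r s : ℝ, 0 < r → r ≤ s → ψ r ≤ ψ s)
    (hψ_int : ∀ r : ℝ, 0 < r → IntegrableOn (fun s => s / ψ s) (Ioo 0 r))
    (hΦ : ∀ r : ℝ, 0 < r → Φ r = r ^ 2 / (2 * ∫ s in Ioo (0:ℝ) r, s / ψ s)) :
    ((Tendsto (fun l => Φ l / ψ l) (nhdsWithin 0 (Ioi 0)) (nhds 0)) →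
      ∀ κ : ℝ, 0 < κ →
        Tendsto (fun x => Φ (κ * x) / Φ x) (nhdsWithin 0 (Ioi 0)) (nhds (κ ^ 2))) ∧
    ((Tendsto (fun l => Φ l / ψ l) atTop (nhds 0)) →
      ∀ κ : ℝ, 0 < κ →
        Tendsto (fun x => Φ (κ * x) / Φ x) atTop (nhds (κ ^ 2))) := by
  constructor
  · intro h κ hκ
    refine stmt8_aux ψ Φ hψ_pos hψ_mono hψ_int hΦ _ ?_ ?_ h κ hκ
    · exact eventually_mem_nhdsWithin
    · intro c hc
      apply tendsto_nhdsWithin_of_tendsto_nhds_of_eventually_within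
      · have : Tendsto (fun x : ℝ => c * x) (nhds 0) (nhds (c * 0)) :=
          (continuous_const.mul continuous_id).tendsto 0
        simpa using this.mono_left nhdsWithin_le_nhds
      · filter_upwards [eventually_mem_nhdsWithin] with x hx
        exact mul_pos hc hx
  · intro h κ hκ
    refine stmt8_aux ψ Φ hψ_pos hψ_mono hψ_int hΦ _ ?_ ?_ h κ hκ
    · exact eventually_gt_atTop 0
    · intro c hc
      exact Tendsto.const_mul_atTop hc tendsto_id
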